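/- For any request sequence, if the sequence is partitioned greedily into maximal intervals each containing at most k distinct items (closing an interval when the next request is to a (k+1)-st distinct item), and the partition has X intervals, then any caching algorithm with cache size k, including the offline optimal, incurs at least X - 1 cache misses. -/

import Mathlib

/-- Partition the request sequence `σ 0, …, σ (n-1)` greedily into `X`
maximal intervals `[t i, t (i+1))` with `t 0 = 0`, `t X = n`, each containing at most
`k` distinct items, where an interval is closed exactly when the next request is to a
`(k+1)`-st distinct item: every non-final interval contains exactly `k` distinct
items and the first request of the following interval is not among them.  Then any
demand-paging algorithm with cache size `k` (cache `C`, loading the requested item,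
adding only requested items, never exceeding `k` items) incurs at least `X − 1`
cache misses. -/
theorem greedy_interval_partition_lower_bound
    {α : Type*} [DecidableEq α] (σ : ℕ → α) (C : ℕ → Finset α)
    (k n X : ℕ) (t : ℕ → ℕ)
    (ht0 : t 0 = 0) (htX : t X = n)
    (hmono : ∀ i < X, t i < t (i + 1))
    (hatmost : ∀ i < X, ((Finset.Ico (t i) (t (i + 1))).image σ).card ≤ k)
    (hgreedy : ∀ i, i + 1 < X →
      ((Finset.Ico (t i) (t (i + 1))).image σ).card = k ∧
        σ (t (i + 1)) ∉ (Finset.Ico (t i) (t (i + 1))).image σ)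
    (hsize : ∀ s, (C s).card ≤ k)
    (hsub : ∀ s, C (s + 1) ⊆ C s ∪ {σ s})
    (hload : ∀ s, σ s ∈ C (s + 1)) :
    X - 1 ≤ ((Finset.range n).filter (fun s => σ s ∉ C s)).card := by
  classical
  -- monotonicity of t on [0, X]
  have tmono : ∀ a b, a ≤ b → b ≤ X → t a ≤ t b := by
    intro a b hab hbX
    induction b with
    | zero =>
      have : a = 0 := Nat.le_zero.mp hab
      simp [this]
    | succ b ih =>
      rcases Nat.lt_or_ge a (b + 1) with h | h
      · have h1 : t a ≤ t b := ih (by omega) (by omega)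
        have h2 : t b < t (b + 1) := hmono b (by omega)
        omega
      · have : a = b + 1 := by omega
        simp [this]
  -- each non-final interval forces a miss in (t i, t (i+1)]
  have exists_miss : ∀ i, i + 1 < X → ∃ s, t i < s ∧ s ≤ t (i + 1) ∧ σ s ∉ C s := by
    intro i hi
    by_contra hcon
    push_neg at hcon
    -- hcon : ∀ s, t i < s → s ≤ t (i+1) → σ s ∈ C s
    have hsubC : ∀ d, t i + 1 + d ≤ t (i + 1) + 1 → C (t i + 1 + d) ⊆ C (t i + 1) := by
      intro d
      induction d with
      | zero => intro _; simp
      | succ d ih =>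
        intro hd
        have hit : σ (t i + 1 + d) ∈ C (t i + 1 + d) :=
          hcon (t i + 1 + d) (by omega) (by omega)
        have hstep : C (t i + 1 + d + 1) ⊆ C (t i + 1 + d) := by
          intro x hx
          rcases Finset.mem_union.mp (hsub (t i + 1 + d) hx) with h1 | h1
          · exact h1
          · have : x = σ (t i + 1 + d) := Finset.mem_singleton.mp h1
            rw [this]; exact hit
        have : t i + 1 + (d + 1) = t i + 1 + d + 1 := by omega
        rw [this]
        exact hstep.trans (ih (by omega))
    have hall : ∀ s, t i ≤ s → s ≤ t (i + 1) → σ s ∈ C (t i + 1) := by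
      intro s h1 h2
      rcases Nat.lt_or_ge (t i) s with hlt | hge
      · have hd := hsubC (s - (t i + 1)) (by omega)
        have heq : t i + 1 + (s - (t i + 1)) = s := by omega
        rw [heq] at hd
        exact hd (hcon s hlt h2)
      · have hs : s = t i := by omega
        rw [hs]; exact hload (t i)
    have hsubset : (Finset.Icc (t i) (t (i + 1))).image σ ⊆ C (t i + 1) := by
      intro x hx
      simp only [Finset.mem_image, Finset.mem_Icc] at hx
      obtain ⟨s, ⟨h1, h2⟩, rfl⟩ := hx
      exact hall s h1 h2
    have hk := hgreedy i hi
    have hIcc : Finset.Icc (t i) (t (i + 1))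
        = insert (t (i + 1)) (Finset.Ico (t i) (t (i + 1))) :=
      (Finset.Ico_insert_right (le_of_lt (hmono i (by omega)))).symm
    have hcard : k + 1 ≤ ((Finset.Icc (t i) (t (i + 1))).image σ).card := by
      rw [hIcc, Finset.image_insert, Finset.card_insert_of_notMem hk.2, hk.1]
    have hle := (Finset.card_le_card hsubset).trans (hsize (t i + 1))
    omega
  have exists_miss' : ∀ i, ∃ s, i + 1 < X → t i < s ∧ s ≤ t (i + 1) ∧ σ s ∉ C s := by
    intro i
    by_cases h : i + 1 < X
    · obtain ⟨s, hs⟩ := exists_miss i h; exact ⟨s, fun _ => hs⟩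
    · exact ⟨0, fun h' => absurd h' h⟩
  choose f hf using exists_miss'
  have hcard : X - 1 = (Finset.range (X - 1)).card := (Finset.card_range _).symm
  rw [hcard]
  apply Finset.card_le_card_of_injOn f
  · intro i hi
    simp only [Finset.mem_coe, Finset.mem_range] at hi
    have hiX : i + 1 < X := by omega
    obtain ⟨h1, h2, h3⟩ := hf i hiX
    simp only [Finset.mem_coe, Finset.mem_filter, Finset.mem_range]
    refine ⟨?_, h3⟩
    have ha : t (i + 1) < t (i + 2) := hmono (i + 1) (by omega)
    have hb : t (i + 2) ≤ t X := tmono (i + 2) X (by omega) le_rfl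
    omega
  · intro a ha b hb hab
    simp only [Finset.coe_range, Set.mem_Iio] at ha hb
    by_contra hne
    have key : ∀ p q, p < q → q < X - 1 → f p < f q := by
      intro p q hpq hq
      have hpX : p + 1 < X := by omega
      have hqX : q + 1 < X := by omega
      obtain ⟨hp1, hp2, _⟩ := hf p hpX
      obtain ⟨hq1, hq2, _⟩ := hf q hqX
      have : t (p + 1) ≤ t q := tmono (p + 1) q (by omega) (by omega)
      omega
    rcases Nat.lt_or_ge a b with h | h
    · exact absurd hab (Nat.ne_of_lt (key a b h hb))
    · have : b < a := by omega
      exact absurd hab.symm (Nat.ne_of_lt (key b a this ha))
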